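/- Let row sums r₁ ≥ … ≥ r_m and column sums c₁ ≥ … ≥ c_n be consistent, with v_j = #{l : r_l ≥ j} and α = (1/2)Σ_j |c_j − v_j|. Then α = 0 if and only if there is exactly one finite subset of ℤ² with these row and column sums. -/

import Mathlib

open Finset

/-- Number of elements of `F` in row `i`. -/
def rowSum (F : Finset (ℤ × ℤ)) (i : ℤ) : ℕ := (F.filter fun p => p.1 = i).card

/-- Number of elements of `F` in column `j`. -/
def colSum (F : Finset (ℤ × ℤ)) (j : ℤ) : ℕ := (F.filter fun p => p.2 = j).card

/-- `F` has row sums `r` on rows `1..m`, column sums `c` on columns `1..n`,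
and zero line sums elsewhere. -/
def hasLineSums (F : Finset (ℤ × ℤ)) (m n : ℕ) (r : Fin m → ℕ) (c : Fin n → ℕ) : Prop :=
  (∀ i : Fin m, rowSum F ((i : ℤ) + 1) = r i) ∧
  (∀ i : ℤ, (∀ k : Fin m, (k : ℤ) + 1 ≠ i) → rowSum F i = 0) ∧
  (∀ j : Fin n, colSum F ((j : ℤ) + 1) = c j) ∧
  (∀ j : ℤ, (∀ k : Fin n, (k : ℤ) + 1 ≠ j) → colSum F j = 0)

/-- The conjugate partition: `conj m r j = #{l : r l ≥ j}`. -/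
def conj (m : ℕ) (r : Fin m → ℕ) (j : ℕ) : ℕ := (Finset.univ.filter fun l => j ≤ r l).card

namespace St11
variable {m n : ℕ} {r : Fin m → ℕ} {c : Fin n → ℕ} {F : Finset (ℤ × ℤ)}

lemma row_mem (h : hasLineSums F m n r c) {p : ℤ × ℤ} (hp : p ∈ F) :
    ∃ i : Fin m, p.1 = (i : ℤ) + 1 := by
  by_contra hcon
  push_neg at hcon
  have h0 : rowSum F p.1 = 0 := h.2.1 p.1 (fun k he => hcon k he.symm)
  have hmem : p ∈ F.filter fun q => q.1 = p.1 := mem_filter.2 ⟨hp, rfl⟩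
  rw [rowSum, card_eq_zero] at h0
  simp [h0] at hmem

lemma col_mem (h : hasLineSums F m n r c) {p : ℤ × ℤ} (hp : p ∈ F) :
    ∃ j : Fin n, p.2 = (j : ℤ) + 1 := by
  by_contra hcon
  push_neg at hcon
  have h0 : colSum F p.2 = 0 := h.2.2.2 p.2 (fun k he => hcon k he.symm)
  have hmem : p ∈ F.filter fun q => q.2 = p.2 := mem_filter.2 ⟨hp, rfl⟩
  rw [colSum, card_eq_zero] at h0
  simp [h0] at hmem

lemma rowCard (h : hasLineSums F m n r c) (i : Fin m) :
    (univ.filter fun j : Fin n => ((i : ℤ) + 1, (j : ℤ) + 1) ∈ F).card = r i := by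
  rw [← h.1 i, rowSum]
  refine Finset.card_bij (fun (j : Fin n) (_ : j ∈ univ.filter fun j : Fin n => ((i : ℤ) + 1, (j : ℤ) + 1) ∈ F) => ((i : ℤ) + 1, (j : ℤ) + 1)) ?_ ?_ ?_
  · intro a ha
    rw [mem_filter] at ha ⊢
    exact ⟨ha.2, rfl⟩
  · intro a _ b _ he
    have : (a : ℤ) = b := by simpa using congrArg Prod.snd he
    exact Fin.ext (by exact_mod_cast this)
  · intro p hp
    rw [mem_filter] at hp
    obtain ⟨j, hj⟩ := col_mem h hp.1
    refine ⟨j, ?_, ?_⟩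
    · simp only [mem_filter, mem_univ, true_and]
      rw [← hj, ← hp.2]; exact hp.1
    · show ((i : ℤ) + 1, (j : ℤ) + 1) = p
      rw [← hj, ← hp.2]

lemma colCard (h : hasLineSums F m n r c) (j : Fin n) :
    (univ.filter fun i : Fin m => ((i : ℤ) + 1, (j : ℤ) + 1) ∈ F).card = c j := by
  rw [← h.2.2.1 j, colSum]
  refine Finset.card_bij (fun (i : Fin m) (_ : i ∈ univ.filter fun i : Fin m => ((i : ℤ) + 1, (j : ℤ) + 1) ∈ F) => ((i : ℤ) + 1, (j : ℤ) + 1)) ?_ ?_ ?_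
  · intro a ha
    rw [mem_filter] at ha ⊢
    exact ⟨ha.2, rfl⟩
  · intro a _ b _ he
    have : (a : ℤ) = b := by simpa using congrArg Prod.fst he
    exact Fin.ext (by exact_mod_cast this)
  · intro p hp
    rw [mem_filter] at hp
    obtain ⟨i, hi⟩ := row_mem h hp.1
    refine ⟨i, ?_, ?_⟩
    · simp only [mem_filter, mem_univ, true_and]
      rw [← hi, ← hp.2]; exact hp.1
    · show ((i : ℤ) + 1, (j : ℤ) + 1) = p
      rw [← hi, ← hp.2]


lemma sum_card_swap {γ δ : Type*} (A : Finset γ) (B : Finset δ) (Q : γ → δ → Prop)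
    [∀ a b, Decidable (Q a b)] :
    ∑ a ∈ A, (B.filter (fun b => Q a b)).card = ∑ b ∈ B, (A.filter (fun a => Q a b)).card := by
  simp_rw [Finset.card_filter]
  exact Finset.sum_comm

lemma card_init (t : ℕ) (ht : t ≤ n) :
    (univ.filter fun j : Fin n => (j : ℕ) < t).card = t := by
  have key : (univ.filter fun j : Fin n => (j : ℕ) < t).card = (Finset.range t).card := by
    refine Finset.card_bij (fun (j : Fin n) (_ : j ∈ univ.filter fun j : Fin n => (j : ℕ) < t) => (j : ℕ)) ?_ ?_ ?_
    · intro a ha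
      rw [mem_filter] at ha
      exact Finset.mem_range.2 ha.2
    · intro a _ b _ he
      exact Fin.ext he
    · intro b hb
      rw [Finset.mem_range] at hb
      exact ⟨⟨b, lt_of_lt_of_le hb ht⟩, by simp [hb], rfl⟩
  simpa using key

lemma r_le_n (h : hasLineSums F m n r c) (i : Fin m) : r i ≤ n := by
  rw [← rowCard h i]
  exact (card_filter_le _ _).trans (by simp)

lemma forward_core (h : hasLineSums F m n r c)
    (hcv : ∀ j : Fin n, c j = conj m r ((j : ℕ) + 1)) (i : Fin m) (j : Fin n) :
    ((i : ℤ) + 1, (j : ℤ) + 1) ∈ F ↔ (j : ℕ) < r i := by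
  set T : Fin m → ℕ → ℕ := fun i k =>
    (univ.filter fun j : Fin n => (j : ℕ) < k ∧ ((i : ℤ) + 1, (j : ℤ) + 1) ∈ F).card with hT
  have hTle : ∀ (i : Fin m) (k : ℕ), k ≤ n → T i k ≤ min (r i) k := by
    intro i k hk
    refine le_min ?_ ?_
    · rw [← rowCard h i]
      exact card_le_card (monotone_filter_right _ (fun x _ hx => hx.2))
    · calc T i k ≤ (univ.filter fun j : Fin n => (j : ℕ) < k).card :=
            card_le_card (monotone_filter_right _ (fun x _ hx => hx.1))
        _ = k := card_init k hk
  have hTeq : ∀ k ≤ n, ∀ i : Fin m, T i k = min (r i) k := by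
    intro k hk
    have hsum : ∑ i : Fin m, T i k = ∑ i : Fin m, min (r i) k := by
      have h1 : ∑ i : Fin m, T i k = ∑ j : Fin n,
          (univ.filter fun i : Fin m => (j : ℕ) < k ∧ ((i : ℤ) + 1, (j : ℤ) + 1) ∈ F).card :=
        sum_card_swap univ univ _
      have h2 : ∀ j : Fin n,
          (univ.filter fun i : Fin m => (j : ℕ) < k ∧ ((i : ℤ) + 1, (j : ℤ) + 1) ∈ F).card =
          (univ.filter fun i : Fin m => (j : ℕ) < k ∧ (j : ℕ) < r i).card := by
        intro j
        by_cases hjk : (j : ℕ) < k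
        · have e1 : (univ.filter fun i : Fin m => (j : ℕ) < k ∧ ((i : ℤ) + 1, (j : ℤ) + 1) ∈ F)
              = (univ.filter fun i : Fin m => ((i : ℤ) + 1, (j : ℤ) + 1) ∈ F) := by
            apply filter_congr; intro x _; simp [hjk]
          have e2 : (univ.filter fun i : Fin m => (j : ℕ) < k ∧ (j : ℕ) < r i)
              = (univ.filter fun i : Fin m => (j : ℕ) + 1 ≤ r i) := by
            apply filter_congr; intro x _
            constructor
            · intro hx; exact hx.2
            · intro hx; exact ⟨hjk, hx⟩
          rw [e1, e2, colCard h j, hcv j, conj]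
        · have e1 : (univ.filter fun i : Fin m => (j : ℕ) < k ∧ ((i : ℤ) + 1, (j : ℤ) + 1) ∈ F) = ∅ :=
            filter_false_of_mem (fun x _ hx => hjk hx.1)
          have e2 : (univ.filter fun i : Fin m => (j : ℕ) < k ∧ (j : ℕ) < r i) = ∅ :=
            filter_false_of_mem (fun x _ hx => hjk hx.1)
          rw [e1, e2]
      have h3 : ∑ j : Fin n, (univ.filter fun i : Fin m => (j : ℕ) < k ∧ (j : ℕ) < r i).card
          = ∑ i : Fin m, (univ.filter fun j : Fin n => (j : ℕ) < k ∧ (j : ℕ) < r i).card :=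
        (sum_card_swap univ univ _).symm
      have h4 : ∀ i : Fin m, (univ.filter fun j : Fin n => (j : ℕ) < k ∧ (j : ℕ) < r i).card
          = min (r i) k := by
        intro i
        have e : (univ.filter fun j : Fin n => (j : ℕ) < k ∧ (j : ℕ) < r i)
            = (univ.filter fun j : Fin n => (j : ℕ) < min (r i) k) := by
          apply filter_congr; intro x _
          constructor
          · intro hx; exact lt_min hx.2 hx.1
          · intro hx; exact ⟨lt_of_lt_of_le hx (min_le_right _ _), lt_of_lt_of_le hx (min_le_left _ _)⟩
        rw [e, card_init _ (le_trans (min_le_right _ _) hk)]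
      rw [h1]
      rw [Finset.sum_congr rfl (fun j _ => h2 j), h3]
      exact Finset.sum_congr rfl (fun i _ => h4 i)
    have := (Finset.sum_eq_sum_iff_of_le (fun i _ => hTle i k hk)).1 hsum
    intro i; exact this i (mem_univ i)
  -- now the membership step
  have hjn : (j : ℕ) < n := j.isLt
  have hstep : T i ((j : ℕ) + 1) = T i (j : ℕ) + (if ((i : ℤ) + 1, (j : ℤ) + 1) ∈ F then 1 else 0) := by
    have hsplit : (univ.filter fun x : Fin n => (x : ℕ) < (j : ℕ) + 1 ∧ ((i : ℤ) + 1, (x : ℤ) + 1) ∈ F)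
        = (univ.filter fun x : Fin n => ((x : ℕ) < (j : ℕ) ∧ ((i : ℤ) + 1, (x : ℤ) + 1) ∈ F)
            ∨ (x = j ∧ ((i : ℤ) + 1, (x : ℤ) + 1) ∈ F)) := by
      apply filter_congr; intro x _
      constructor
      · rintro ⟨h1, h2⟩
        rcases Nat.lt_or_ge (x : ℕ) (j : ℕ) with hlt | hge
        · exact Or.inl ⟨hlt, h2⟩
        · exact Or.inr ⟨Fin.ext (by omega), h2⟩
      · rintro (⟨h1, h2⟩ | ⟨h1, h2⟩)
        · exact ⟨by omega, h2⟩
        · subst h1; exact ⟨by omega, h2⟩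
    rw [show T i ((j : ℕ) + 1) = (univ.filter fun x : Fin n => (x : ℕ) < (j : ℕ) + 1 ∧ ((i : ℤ) + 1, (x : ℤ) + 1) ∈ F).card from rfl]
    rw [hsplit, filter_or, card_union_of_disjoint]
    · congr 1
      by_cases hP : ((i : ℤ) + 1, (j : ℤ) + 1) ∈ F
      · rw [if_pos hP]
        have e : (univ.filter fun x : Fin n => x = j ∧ ((i : ℤ) + 1, (x : ℤ) + 1) ∈ F)
            = {j} := by
          ext x
          simp only [mem_filter, mem_univ, true_and, mem_singleton]
          constructor
          · rintro ⟨h1, _⟩; exact h1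
          · rintro rfl; exact ⟨rfl, hP⟩
        rw [e, card_singleton]
      · rw [if_neg hP]
        have e : (univ.filter fun x : Fin n => x = j ∧ ((i : ℤ) + 1, (x : ℤ) + 1) ∈ F) = ∅ := by
          apply filter_false_of_mem
          rintro x _ ⟨rfl, h2⟩; exact hP h2
        rw [e, card_empty]
    · rw [Finset.disjoint_left]
      rintro x hx hy
      rw [mem_filter] at hx hy
      obtain ⟨-, h1, -⟩ := hx
      obtain ⟨-, rfl, -⟩ := hy
      omega
  have e1 : T i ((j : ℕ) + 1) = min (r i) ((j : ℕ) + 1) := hTeq _ hjn i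
  have e2 : T i (j : ℕ) = min (r i) (j : ℕ) := hTeq _ (le_of_lt hjn) i
  constructor
  · intro hP
    rw [if_pos hP] at hstep
    rw [e1, e2] at hstep
    omega
  · intro hlt
    by_contra hP
    rw [if_neg hP] at hstep
    rw [e1, e2] at hstep
    omega

lemma card_filter_swap {β : Type*} [DecidableEq β] {s : Finset β} (p : β → Prop) [DecidablePred p]
    {x y u v : β} (hx : x ∈ s) (hy : y ∈ s) (hu : u ∉ s) (hv : v ∉ s)
    (hxy : x ≠ y) (huv : u ≠ v) (hpx : p x ↔ p u) (hpy : p y ↔ p v) :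
    ((insert u (insert v ((s.erase x).erase y))).filter p).card = (s.filter p).card := by
  have hchain : ∀ w : β, w ∈ ((s.filter p).erase x).erase y → w ∈ s :=
    fun w hw => (mem_filter.1 (mem_of_mem_erase (mem_of_mem_erase hw))).1
  rw [filter_insert, filter_insert, filter_erase, filter_erase]
  by_cases hpu : p u
  · have hpxx : p x := hpx.mpr hpu
    have hxt : x ∈ s.filter p := mem_filter.2 ⟨hx, hpxx⟩
    by_cases hpv : p v
    · have hpyy : p y := hpy.mpr hpv
      have hyt : y ∈ (s.filter p).erase x := mem_erase.2 ⟨fun he => hxy he.symm, mem_filter.2 ⟨hy, hpyy⟩⟩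
      rw [if_pos hpu, if_pos hpv]
      have hun : u ∉ insert v (((s.filter p).erase x).erase y) := by
        simp only [mem_insert]
        rintro (rfl | hmem)
        · exact huv rfl
        · exact hu (hchain u hmem)
      have hvn : v ∉ ((s.filter p).erase x).erase y := fun hmem => hv (hchain v hmem)
      rw [card_insert_of_notMem hun, card_insert_of_notMem hvn,
        card_erase_of_mem hyt, card_erase_of_mem hxt]
      have h1 : 1 ≤ ((s.filter p).erase x).card := card_pos.2 ⟨y, hyt⟩
      have h2 : ((s.filter p).erase x).card = (s.filter p).card - 1 := card_erase_of_mem hxt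
      omega
    · have hpyy : ¬ p y := fun hy' => hpv (hpy.mp hy')
      have hyn : y ∉ (s.filter p).erase x := fun hmem => hpyy (mem_filter.1 (mem_of_mem_erase hmem)).2
      rw [if_pos hpu, if_neg hpv, erase_eq_of_notMem hyn]
      have hun : u ∉ (s.filter p).erase x :=
        fun hmem => hu (mem_filter.1 (mem_of_mem_erase hmem)).1
      rw [card_insert_of_notMem hun, card_erase_of_mem hxt]
      have h1 : 1 ≤ (s.filter p).card := card_pos.2 ⟨x, hxt⟩
      omega
  · have hpxx : ¬ p x := fun hx' => hpu (hpx.mp hx')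
    have hxn : x ∉ s.filter p := fun hmem => hpxx (mem_filter.1 hmem).2
    rw [erase_eq_of_notMem hxn]
    by_cases hpv : p v
    · have hpyy : p y := hpy.mpr hpv
      have hyt : y ∈ s.filter p := mem_filter.2 ⟨hy, hpyy⟩
      rw [if_neg hpu, if_pos hpv]
      have hvn : v ∉ (s.filter p).erase y :=
        fun hmem => hv (mem_filter.1 (mem_of_mem_erase hmem)).1
      rw [card_insert_of_notMem hvn, card_erase_of_mem hyt]
      have h1 : 1 ≤ (s.filter p).card := card_pos.2 ⟨y, hyt⟩
      omega
    · have hpyy : ¬ p y := fun hy' => hpv (hpy.mp hy')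
      have hyn : y ∉ s.filter p := fun hmem => hpyy (mem_filter.1 hmem).2
      rw [if_neg hpu, if_neg hpv, erase_eq_of_notMem hyn]

lemma swap_hasLineSums (h : hasLineSums F m n r c) {a b a' b' : ℤ}
    (hab : (a, b) ∈ F) (ha'b' : (a', b') ∈ F) (ha : a ≠ a') (hb : b ≠ b')
    (h1 : (a, b') ∉ F) (h2 : (a', b) ∉ F) :
    hasLineSums (insert (a, b') (insert (a', b) ((F.erase (a, b)).erase (a', b')))) m n r c := by
  have hxy : ((a, b) : ℤ × ℤ) ≠ (a', b') := fun he => ha (congrArg Prod.fst he)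
  have huv : ((a, b') : ℤ × ℤ) ≠ (a', b) := fun he => ha (congrArg Prod.fst he)
  have hvu : ((a', b) : ℤ × ℤ) ≠ (a, b') := fun he => ha ((congrArg Prod.fst he).symm)
  have hrow : ∀ z : ℤ,
      rowSum (insert (a, b') (insert (a', b) ((F.erase (a, b)).erase (a', b')))) z = rowSum F z := by
    intro z
    refine card_filter_swap (fun q => q.1 = z) hab ha'b' h1 h2 hxy huv ?_ ?_ <;> exact Iff.rfl
  have hcol : ∀ z : ℤ,
      colSum (insert (a, b') (insert (a', b) ((F.erase (a, b)).erase (a', b')))) z = colSum F z := by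
    intro z
    have hcomm : (insert ((a : ℤ), b') (insert (a', b) ((F.erase (a, b)).erase (a', b'))))
        = insert (a', b) (insert (a, b') ((F.erase (a, b)).erase (a', b'))) := Finset.insert_comm _ _ _
    rw [colSum, hcomm]
    refine card_filter_swap (fun q => q.2 = z) hab ha'b' h2 h1 hxy hvu ?_ ?_ <;> exact Iff.rfl
  exact ⟨fun i => (hrow _).trans (h.1 i), fun i hi => (hrow _).trans (h.2.1 i hi),
    fun j => (hcol _).trans (h.2.2.1 j), fun j hj => (hcol _).trans (h.2.2.2 j hj)⟩

lemma rows_chain (h : hasLineSums F m n r c)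
    (huniq : ∀ G : Finset (ℤ × ℤ), hasLineSums G m n r c → G = F) (i i' : Fin m) :
    (∀ x : ℤ, ((i : ℤ) + 1, x) ∈ F → ((i' : ℤ) + 1, x) ∈ F) ∨
    (∀ x : ℤ, ((i' : ℤ) + 1, x) ∈ F → ((i : ℤ) + 1, x) ∈ F) := by
  by_contra hcon
  push_neg at hcon
  obtain ⟨⟨x, hx1, hx2⟩, ⟨y, hy1, hy2⟩⟩ := hcon
  have hii' : i ≠ i' := by
    rintro rfl; exact hx2 hx1
  have hne : ((i : ℤ) + 1) ≠ ((i' : ℤ) + 1) := by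
    intro he
    apply hii'
    have : ((i : ℕ) : ℤ) = ((i' : ℕ) : ℤ) := by omega
    exact Fin.ext (by exact_mod_cast this)
  have hxy : x ≠ y := by
    rintro rfl; exact hx2 hy1
  have hG := swap_hasLineSums h hx1 hy1 hne hxy hy2 hx2
  have hGF := huniq _ hG
  apply hy2
  rw [← hGF]
  exact mem_insert_self _ _

lemma col_subset (h : hasLineSums F m n r c) (hc : Antitone c)
    (huniq : ∀ G : Finset (ℤ × ℤ), hasLineSums G m n r c → G = F) {j j' : Fin n}
    (hjj : j ≤ j') {i : Fin m}
    (hij' : ((i : ℤ) + 1, (j' : ℤ) + 1) ∈ F) : ((i : ℤ) + 1, (j : ℤ) + 1) ∈ F := by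
  by_contra hni
  have hsub : insert i (univ.filter fun i'' : Fin m => ((i'' : ℤ) + 1, (j : ℤ) + 1) ∈ F)
      ⊆ (univ.filter fun i'' : Fin m => ((i'' : ℤ) + 1, (j' : ℤ) + 1) ∈ F) := by
    intro i'' hmem
    rcases mem_insert.1 hmem with rfl | hmem'
    · exact mem_filter.2 ⟨mem_univ _, hij'⟩
    · rw [mem_filter] at hmem'
      rcases rows_chain h huniq i i'' with hch | hch
      · exact mem_filter.2 ⟨mem_univ _, hch _ hij'⟩
      · exact absurd (hch _ hmem'.2) hni
  have hcard := card_le_card hsub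
  have hnotmem : i ∉ (univ.filter fun i'' : Fin m => ((i'' : ℤ) + 1, (j : ℤ) + 1) ∈ F) :=
    fun hmem => hni (mem_filter.1 hmem).2
  rw [card_insert_of_notMem hnotmem] at hcard
  rw [colCard h j, colCard h j'] at hcard
  have := hc hjj
  omega

lemma backward_char (h : hasLineSums F m n r c) (hc : Antitone c)
    (huniq : ∀ G : Finset (ℤ × ℤ), hasLineSums G m n r c → G = F) (i : Fin m) (j : Fin n) :
    ((i : ℤ) + 1, (j : ℤ) + 1) ∈ F ↔ (j : ℕ) < r i := by
  constructor
  · intro hP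
    have hsub : (univ.filter fun x : Fin n => (x : ℕ) < (j : ℕ) + 1)
        ⊆ (univ.filter fun x : Fin n => ((i : ℤ) + 1, (x : ℤ) + 1) ∈ F) := by
      intro x hx
      rw [mem_filter] at hx ⊢
      refine ⟨mem_univ x, ?_⟩
      exact col_subset h hc huniq (by omega : x ≤ j) hP
    have hcard := card_le_card hsub
    rw [card_init ((j : ℕ) + 1) j.isLt, rowCard h i] at hcard
    omega
  · intro hlt
    by_contra hP
    have hsub : (univ.filter fun x : Fin n => ((i : ℤ) + 1, (x : ℤ) + 1) ∈ F)
        ⊆ (univ.filter fun x : Fin n => (x : ℕ) < (j : ℕ)) := by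
      intro x hx
      rw [mem_filter] at hx ⊢
      refine ⟨mem_univ x, ?_⟩
      by_contra hge
      exact hP (col_subset h hc huniq (by omega : j ≤ x) hx.2)
    have hcard := card_le_card hsub
    rw [rowCard h i, card_init (j : ℕ) (le_of_lt j.isLt)] at hcard
    omega

lemma c_eq_conj (h : hasLineSums F m n r c)
    (hchar : ∀ (i : Fin m) (j : Fin n), ((i : ℤ) + 1, (j : ℤ) + 1) ∈ F ↔ (j : ℕ) < r i)
    (j : Fin n) : c j = conj m r ((j : ℕ) + 1) := by
  rw [← colCard h j, conj]
  congr 1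
  apply filter_congr
  intro x _
  rw [hchar x j]
  exact Iff.of_eq rfl

lemma eq_of_char {G : Finset (ℤ × ℤ)} (hF : hasLineSums F m n r c) (hG : hasLineSums G m n r c)
    (hFc : ∀ (i : Fin m) (j : Fin n), ((i : ℤ) + 1, (j : ℤ) + 1) ∈ F ↔ (j : ℕ) < r i)
    (hGc : ∀ (i : Fin m) (j : Fin n), ((i : ℤ) + 1, (j : ℤ) + 1) ∈ G ↔ (j : ℕ) < r i) :
    F = G := by
  ext p
  constructor
  · intro hp
    obtain ⟨i, hi⟩ := row_mem hF hp
    obtain ⟨j, hj⟩ := col_mem hF hp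
    have hpe : p = ((i : ℤ) + 1, (j : ℤ) + 1) := Prod.ext hi hj
    rw [hpe] at hp ⊢
    rw [hGc i j]
    exact (hFc i j).1 hp
  · intro hp
    obtain ⟨i, hi⟩ := row_mem hG hp
    obtain ⟨j, hj⟩ := col_mem hG hp
    have hpe : p = ((i : ℤ) + 1, (j : ℤ) + 1) := Prod.ext hi hj
    rw [hpe] at hp ⊢
    rw [hFc i j]
    exact (hGc i j).1 hp

end St11

open St11 in
theorem stmt11 (m n α : ℕ) (r : Fin m → ℕ) (c : Fin n → ℕ)
    (hr : Antitone r) (hc : Antitone c)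
    (hcons : ∃ F : Finset (ℤ × ℤ), hasLineSums F m n r c)
    (hα : 2 * α = ∑ j : Fin n, ((c j : ℤ) - (conj m r ((j : ℕ) + 1) : ℤ)).natAbs) :
    α = 0 ↔ ∃! F : Finset (ℤ × ℤ), hasLineSums F m n r c := by
  constructor
  · intro hα0
    rw [hα0, Nat.mul_zero] at hα
    have hcv : ∀ j : Fin n, c j = conj m r ((j : ℕ) + 1) := by
      intro j
      have h0 := (Finset.sum_eq_zero_iff.1 hα.symm) j (mem_univ j)
      rw [Int.natAbs_eq_zero, sub_eq_zero] at h0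
      exact_mod_cast h0
    obtain ⟨F0, hF0⟩ := hcons
    refine ⟨F0, hF0, ?_⟩
    intro G hG
    exact eq_of_char hG hF0 (forward_core hG hcv) (forward_core hF0 hcv)
  · rintro ⟨F0, hF0, huniq⟩
    have hchar := backward_char hF0 hc (fun G hG => huniq G hG)
    have hcv := c_eq_conj hF0 hchar
    have hzero : ∑ j : Fin n, ((c j : ℤ) - (conj m r ((j : ℕ) + 1) : ℤ)).natAbs = 0 := by
      apply Finset.sum_eq_zero
      intro j _
      rw [hcv j]
      simp
    omega
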